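/- The 4×4 matrix A(u) with rows (v,0,0,B), (0,v,0,E), (0,0,v,D), (η,η,η,(3L-2)v/L), where L = 1-(B+E+D) and η = Lγ/(1-L) - v²/L², has eigenvalues λ = v (with multiplicity 2) and λ = (2L-1)v/L ± √((1-L)Δ), where Δ = Lγ/(1-L) - v²/L, provided 0 < L < 1 and Δ ≥ 0. -/

import Mathlib

open Polynomial

set_option maxHeartbeats 2000000 in
/-- The Jacobian matrix of the biofilm flux has eigenvalues `v` (multiplicity 2)
and `(2L-1)v/L ± √((1-L)Δ)`: its characteristic polynomial factors accordingly. -/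
theorem stmt_0 (B E D v γ : ℝ) (hB : B ∈ Set.Ioo (0:ℝ) 1) (hE : E ∈ Set.Ioo (0:ℝ) 1)
    (hD : D ∈ Set.Ioo (0:ℝ) 1) (hγ : 0 < γ)
    (L : ℝ) (hL : L = 1 - (B + E + D)) (hL0 : 0 < L) (hL1 : L < 1)
    (η Δ : ℝ) (hη : η = L * γ / (1 - L) - v ^ 2 / L ^ 2)
    (hΔ : Δ = L * γ / (1 - L) - v ^ 2 / L) (hΔ0 : 0 ≤ Δ)
    (A : Matrix (Fin 4) (Fin 4) ℝ)
    (hA : A = Matrix.of ![![v, 0, 0, B], ![0, v, 0, E], ![0, 0, v, D],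
      ![η, η, η, (3 * L - 2) * v / L]]) :
    A.charpoly =
      (X - C v) ^ 2 * (X - C ((2 * L - 1) * v / L + Real.sqrt ((1 - L) * Δ)))
        * (X - C ((2 * L - 1) * v / L - Real.sqrt ((1 - L) * Δ))) := by
  have hs : Real.sqrt ((1 - L) * Δ) ^ 2 = (1 - L) * Δ :=
    Real.sq_sqrt (by nlinarith)
  have hBED : B + E + D = 1 - L := by linarith
  have hLne : L ≠ 0 := hL0.ne'
  have h1L : (1:ℝ) - L ≠ 0 := by linarith
  have hc : A.charmatrix = Matrix.of ![![X - C v, 0, 0, -C B], ![0, X - C v, 0, -C E],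
      ![0, 0, X - C v, -C D],
      ![-C η, -C η, -C η, X - C ((3 * L - 2) * v / L)]] := by
    subst hA
    ext i j
    fin_cases i <;> fin_cases j <;>
      simp [Matrix.charmatrix_apply, Matrix.diagonal]
  set s := Real.sqrt ((1 - L) * Δ) with hsdef
  have hvm : v + (3 * L - 2) * v / L = 2 * ((2 * L - 1) * v / L) := by
    field_simp; ring
  have hkey : v * ((3 * L - 2) * v / L) - ((2 * L - 1) * v / L) ^ 2
      = η * (1 - L) - s ^ 2 := by
    rw [hs, hη, hΔ]; field_simp; ring
  apply Polynomial.funext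
  intro x
  rw [Matrix.charpoly, hc, Matrix.det_succ_row_zero]
  simp (config := { decide := true }) [Fin.sum_univ_succ, Matrix.det_fin_three,
    Fin.succAbove, Matrix.submatrix,
    show Fin.castSucc (2:Fin 3) = (2:Fin 4) from rfl,
    show Fin.castSucc (1:Fin 3) = (1:Fin 4) from rfl,
    show Fin.castSucc (0:Fin 3) = (0:Fin 4) from rfl,
    show Fin.succ (2:Fin 3) = (3:Fin 4) from rfl,
    show Fin.succ (1:Fin 3) = (2:Fin 4) from rfl,
    show Fin.succ (0:Fin 3) = (1:Fin 4) from rfl]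
  linear_combination (x - v) ^ 2 * (hkey - x * hvm - η * hBED)
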